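/- Suppose (x, τ) is an entire solution of the threshold delay differential equation, i.e. the threshold and differential equation conditions hold for every t ∈ ℝ, and suppose x is bounded on ℝ. Then x(t) > 0 for all t ∈ ℝ. -/

import Mathlib

open Real Filter

/-- Every bounded entire solution of the threshold delay differential
equation is strictly positive. -/
theorem threshold_dde_entire_bounded_positive
    (β μ γ a v0 vU g0 gU : ℝ)
    (hβ : 0 < β) (hμ : 0 < μ) (hγ : 0 < γ) (ha : 0 < a)
    (hv0 : 0 < v0) (hv0U : v0 ≤ vU) (hg0 : 0 < g0) (hg0U : g0 ≤ gU)
    (v g : ℝ → ℝ) (hv : Continuous v) (hg : Continuous g)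
    (hvb : ∀ y, v0 ≤ v y ∧ v y ≤ vU) (hgb : ∀ y, g0 ≤ g y ∧ g y ≤ gU)
    (x τ : ℝ → ℝ) (hx : Continuous x)
    (hτpos : ∀ t : ℝ, 0 < τ t)
    (hthr : ∀ t : ℝ, (∫ s in (t - τ t)..t, v (x s)) = a)
    (hode : ∀ t : ℝ,
      HasDerivAt x
        (β * Real.exp (-μ * τ t) * (v (x t) / v (x (t - τ t))) * g (x (t - τ t))
          - γ * x t) t)
    (hbd : ∃ M : ℝ, ∀ t, |x t| ≤ M) :
    ∀ t : ℝ, 0 < x t := by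
  obtain ⟨M, hM⟩ := hbd
  have hvU : 0 < vU := lt_of_lt_of_le hv0 hv0U
  set c : ℝ := β * Real.exp (-μ * (a / v0)) * (v0 / vU) * g0 with hc
  have hcpos : 0 < c := by positivity
  -- bound on τ
  have hτle : ∀ t, τ t ≤ a / v0 := by
    intro t
    have hle : t - τ t ≤ t := by linarith [hτpos t]
    have hint : IntervalIntegrable (fun s => v (x s)) MeasureTheory.volume (t - τ t) t :=
      (hv.comp hx).intervalIntegrable _ _
    have hmono : (∫ _ in (t - τ t)..t, (v0 : ℝ)) ≤ ∫ s in (t - τ t)..t, v (x s) :=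
      intervalIntegral.integral_mono_on hle intervalIntegrable_const hint
        (fun s _ => (hvb (x s)).1)
    rw [intervalIntegral.integral_const, hthr t] at hmono
    have h2 : τ t * v0 ≤ a := by
      have h3 : (t - (t - τ t)) • (v0 : ℝ) = τ t * v0 := by
        simp [smul_eq_mul]
      linarith [h3 ▸ hmono]
    exact (le_div_iff₀ hv0).mpr h2
  -- lower bound on the production term
  have hprod : ∀ t, c ≤ β * Real.exp (-μ * τ t) * (v (x t) / v (x (t - τ t))) * g (x (t - τ t)) := by
    intro t
    have h1 : Real.exp (-μ * (a / v0)) ≤ Real.exp (-μ * τ t) := by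
      apply Real.exp_le_exp.mpr
      nlinarith [hτle t]
    have h2 : v0 / vU ≤ v (x t) / v (x (t - τ t)) :=
      div_le_div₀ (le_of_lt (lt_of_lt_of_le hv0 (hvb (x t)).1)) (hvb (x t)).1
        (lt_of_lt_of_le hv0 (hvb (x (t - τ t))).1) (hvb (x (t - τ t))).2
    have h3 : g0 ≤ g (x (t - τ t)) := (hgb _).1
    have hE : (0:ℝ) ≤ Real.exp (-μ * (a / v0)) := le_of_lt (Real.exp_pos _)
    have hR : (0:ℝ) ≤ v0 / vU := by positivity
    have hQ : (0:ℝ) ≤ β * Real.exp (-μ * τ t) * (v (x t) / v (x (t - τ t))) :=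
      mul_nonneg (mul_nonneg hβ.le (Real.exp_pos _).le)
        (div_nonneg (le_of_lt (lt_of_lt_of_le hv0 (hvb (x t)).1))
          (le_of_lt (lt_of_lt_of_le hv0 (hvb (x (t - τ t))).1)))
    calc c = β * Real.exp (-μ * (a / v0)) * (v0 / vU) * g0 := rfl
      _ ≤ β * Real.exp (-μ * τ t) * (v (x t) / v (x (t - τ t))) * g (x (t - τ t)) := by
          gcongr <;> first | exact hβ.le | exact hg0.le | exact hE | exact hR | exact hQ | positivity
  -- the auxiliary function G
  set G : ℝ → ℝ := fun t => Real.exp (γ * t) * x t - (c / γ) * Real.exp (γ * t) with hG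
  have hGderiv : ∀ t, HasDerivAt G
      (Real.exp (γ * t) * (β * Real.exp (-μ * τ t) * (v (x t) / v (x (t - τ t))) * g (x (t - τ t)))
        - c * Real.exp (γ * t)) t := by
    intro t
    have hE : HasDerivAt (fun s => Real.exp (γ * s)) (γ * Real.exp (γ * t)) t := by
      have := ((hasDerivAt_id t).const_mul γ).exp
      simpa [mul_comm] using this
    have h1 := hE.mul (hode t)
    have h2 := hE.const_mul (c / γ)
    have h := h1.sub h2
    convert h using 1
    · rfl
    · rfl
    · rfl
    field_simp
    ring
  have hGnn : ∀ t, 0 ≤ Real.exp (γ * t) * (β * Real.exp (-μ * τ t) * (v (x t) / v (x (t - τ t))) * g (x (t - τ t))) - c * Real.exp (γ * t) := by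
    intro t
    have := hprod t
    nlinarith [Real.exp_pos (γ * t)]
  have hGmono : Monotone G := by
    apply monotone_of_deriv_nonneg
    · exact fun t => (hGderiv t).differentiableAt
    · intro t
      rw [(hGderiv t).deriv]
      exact hGnn t
  -- G tends to 0 at -∞
  have hMnn : 0 ≤ M := le_trans (abs_nonneg _) (hM 0)
  have hlim : Tendsto G atBot (nhds 0) := by
    have hb : Tendsto (fun s => Real.exp (γ * s) * (M + c / γ)) atBot (nhds 0) := by
      have h1 : Tendsto (fun s : ℝ => γ * s) atBot atBot :=
        (tendsto_id (α := ℝ)).const_mul_atBot hγ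
      have h2 : Tendsto (fun s => Real.exp (γ * s)) atBot (nhds 0) :=
        Real.tendsto_exp_atBot.comp h1
      simpa using h2.mul_const (M + c / γ)
    apply squeeze_zero_norm _ hb
    intro s
    have hx' : |x s - c / γ| ≤ M + c / γ := by
      have := hM s
      have hcγ : 0 < c / γ := by positivity
      rw [abs_le] at this ⊢
      constructor <;> linarith [this.1, this.2]
    have : ‖G s‖ = Real.exp (γ * s) * |x s - c / γ| := by
      rw [hG]
      simp only [Real.norm_eq_abs]
      rw [show Real.exp (γ * s) * x s - c / γ * Real.exp (γ * s)
        = Real.exp (γ * s) * (x s - c / γ) by ring, abs_mul,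
        abs_of_pos (Real.exp_pos _)]
    rw [this]
    exact mul_le_mul_of_nonneg_left hx' (le_of_lt (Real.exp_pos _))
  -- conclude
  intro t
  have hGt : 0 ≤ G t := by
    apply le_of_tendsto hlim
    filter_upwards [eventually_le_atBot t] with s hs
    exact hGmono hs
  have hexp : 0 < Real.exp (γ * t) := Real.exp_pos _
  have : c / γ ≤ x t := by
    rw [hG] at hGt
    simp only at hGt
    nlinarith
  have hcγ : 0 < c / γ := by positivity
  linarith
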